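/- Let k > 0 and let v0 satisfy 1 < v0 < u(k) - k. Set r = R(v0), A = -(v0 + k)·exp(-v0 + k·r/v0), and let w ≥ -1 be a real number satisfying w·exp(w) = A. Then the pair x = v0 + r, y = w - (v0 + k)·r/v0 is the unique solution with x, y > 0 of the system of equations v0 = x/(1 - exp(-x)) and v0 + k = y·exp(x)/(1 - exp(-y)). -/

import Mathlib

lemma gMono : StrictMonoOn (fun t : ℝ => t * Real.exp t) (Set.Ici (-1)) := by
  apply strictMonoOn_of_deriv_pos (convex_Ici _)
  · exact (continuous_id.mul Real.continuous_exp).continuousOn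
  · intro t ht
    rw [interior_Ici] at ht
    have h : HasDerivAt (fun t : ℝ => t * Real.exp t)
        (1 * Real.exp t + t * Real.exp t) t :=
      (hasDerivAt_id t).mul (Real.hasDerivAt_exp t)
    rw [h.deriv]
    have ht' : (-1:ℝ) < t := ht
    nlinarith [Real.exp_pos t]

lemma psiMono : StrictMonoOn (fun t : ℝ => t / (1 - Real.exp (-t))) (Set.Ioi 0) := by
  have hne : ∀ t : ℝ, 0 < t → 1 - Real.exp (-t) ≠ 0 := by
    intro t ht
    have : Real.exp (-t) < 1 := Real.exp_lt_one_iff.mpr (by linarith)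
    linarith
  apply strictMonoOn_of_deriv_pos (convex_Ioi 0)
  · exact ContinuousOn.div continuousOn_id
      (Continuous.continuousOn (by continuity))
      (fun t ht => hne t ht)
  · intro t ht
    rw [interior_Ioi] at ht
    have ht0 : (0:ℝ) < t := ht
    have h1 : HasDerivAt (fun t : ℝ => 1 - Real.exp (-t)) (Real.exp (-t)) t := by
      have h0 : HasDerivAt (fun t : ℝ => Real.exp (-t)) (Real.exp (-t) * (-1)) t :=
        (Real.hasDerivAt_exp (-t)).comp t (hasDerivAt_neg t)
      simpa using h0.const_sub 1
    have h2 : HasDerivAt (fun t : ℝ => t / (1 - Real.exp (-t)))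
        ((1 * (1 - Real.exp (-t)) - t * Real.exp (-t)) / (1 - Real.exp (-t)) ^ 2) t :=
      (hasDerivAt_id t).div h1 (hne t ht0)
    rw [h2.deriv]
    have hlt : t + 1 < Real.exp t := Real.add_one_lt_exp (ne_of_gt ht0)
    have hE : Real.exp t * Real.exp (-t) = 1 := by
      rw [← Real.exp_add]; simp
    have hE1 : Real.exp (-t) < 1 := Real.exp_lt_one_iff.mpr (by linarith)
    apply div_pos
    · nlinarith [Real.exp_pos (-t)]
    · exact pow_pos (by linarith) 2

lemma HMono : StrictMonoOn (fun s : ℝ => s - s * Real.log s / (s - 1)) (Set.Ioi 1) := by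
  apply strictMonoOn_of_deriv_pos (convex_Ioi 1)
  · apply ContinuousOn.sub continuousOn_id
    apply ContinuousOn.div
    · exact ContinuousOn.mul continuousOn_id
        (Real.continuousOn_log.mono (by intro s hs; simp at hs ⊢; linarith))
    · exact continuousOn_id.sub continuousOn_const
    · intro s hs; simp at hs; intro h; have := sub_eq_zero.mp h; linarith
  · intro s hs
    rw [interior_Ioi] at hs
    have hs1 : (1:ℝ) < s := hs
    have hs0 : (0:ℝ) < s := by linarith
    have hne : s - 1 ≠ 0 := by intro h; have := sub_eq_zero.mp h; linarith
    have hd1 : HasDerivAt (fun s : ℝ => s * Real.log s) (Real.log s + 1) s := by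
      have h := (hasDerivAt_id s).mul (Real.hasDerivAt_log (ne_of_gt hs0))
      exact h.congr_deriv (show 1 * Real.log s + id s * s⁻¹ = Real.log s + 1 by simp [ne_of_gt hs0])
    have hd2 : HasDerivAt (fun s : ℝ => s - 1) 1 s := by
      simpa using (hasDerivAt_id s).sub_const 1
    have hd3 : HasDerivAt (fun s : ℝ => s - s * Real.log s / (s - 1))
        (1 - ((Real.log s + 1) * (s - 1) - s * Real.log s * 1) / (s - 1) ^ 2) s :=
      (hasDerivAt_id s).sub (hd1.div hd2 hne)
    rw [hd3.deriv]
    have hL : 1 - 1 / s < Real.log s := by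
      have h := Real.log_lt_sub_one_of_pos (show (0:ℝ) < 1/s by positivity)
        (by intro h; rw [div_eq_one_iff_eq (ne_of_gt hs0)] at h; linarith)
      rw [Real.log_div one_ne_zero (ne_of_gt hs0), Real.log_one] at h
      linarith
    have hsq : (0:ℝ) < (s - 1) ^ 2 := by positivity
    rw [sub_pos, div_lt_one hsq]
    have hsL : s - 1 < s * Real.log s := by
      have := mul_lt_mul_of_pos_left hL hs0
      rw [mul_sub, mul_one, mul_div_cancel₀ _ (ne_of_gt hs0)] at this
      linarith
    nlinarith [mul_pos (mul_pos (sub_pos.mpr hs1) (sub_pos.mpr hs1)) (sub_pos.mpr hs1)]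

theorem stmt3 (k u v0 r w : ℝ) (hk : 0 < k) (hu : 1 < u)
    (huk : k = u - Real.log u / (1 - 1 / u))
    (hv0 : 1 < v0) (hv0' : v0 < u - k)
    (hr1 : -1 ≤ r) (hr2 : r < 0) (hre : r * Real.exp r = -v0 * Real.exp (-v0))
    (hw1 : -1 ≤ w)
    (hwe : w * Real.exp w = -(v0 + k) * Real.exp (-v0 + k * r / v0)) :
    0 < v0 + r ∧ 0 < w - (v0 + k) * r / v0 ∧
    v0 = (v0 + r) / (1 - Real.exp (-(v0 + r))) ∧
    v0 + k = (w - (v0 + k) * r / v0) * Real.exp (v0 + r) /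
      (1 - Real.exp (-(w - (v0 + k) * r / v0))) ∧
    (∀ x y : ℝ, 0 < x → 0 < y →
      v0 = x / (1 - Real.exp (-x)) →
      v0 + k = y * Real.exp x / (1 - Real.exp (-y)) →
      x = v0 + r ∧ y = w - (v0 + k) * r / v0) := by
  have hv0pos : (0:ℝ) < v0 := by linarith
  have hv0ne : v0 ≠ 0 := ne_of_gt hv0pos
  have hrne : r ≠ 0 := ne_of_lt hr2
  have hxpos : 0 < v0 + r := by linarith
  -- exp(-(v0+r)) = -r/v0
  have hstep : r = -v0 * Real.exp (-v0 + -r) := by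
    have h := congrArg (fun z => z * Real.exp (-r)) hre
    simp only [mul_assoc, ← Real.exp_add] at h
    simpa using h
  have herx : Real.exp (-(v0 + r)) = -r / v0 := by
    rw [show -(v0 + r) = -v0 + -r by ring, eq_div_iff hv0ne]
    nlinarith [hstep]
  have hxne : v0 + r ≠ 0 := ne_of_gt hxpos
  have hexpx : Real.exp (v0 + r) = v0 / (-r) := by
    have hprod : Real.exp (-(v0 + r)) * Real.exp (v0 + r) = 1 := by
      rw [← Real.exp_add, show -(v0+r) + (v0+r) = 0 by ring, Real.exp_zero]
    rw [herx] at hprod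
    rw [eq_div_iff (neg_ne_zero.mpr hrne)]
    field_simp at hprod
    linarith [hprod]
  -- first equation
  have eq1 : v0 = (v0 + r) / (1 - Real.exp (-(v0 + r))) := by
    rw [herx, show 1 - -r / v0 = (v0 + r) / v0 by field_simp; ring,
      div_div_eq_mul_div, mul_comm, mul_div_assoc, div_self hxne, mul_one]
  -- key inequality via HMono
  have hs1 : (1:ℝ) < v0 + k := by linarith
  have hsu : v0 + k < u := by linarith
  have hune : u ≠ 0 := by positivity
  have hu1ne : u - 1 ≠ 0 := by intro h; have := sub_eq_zero.mp h; linarith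
  have hHu : u - u * Real.log u / (u - 1) = k := by
    rw [huk]
    congr 1
    rw [show (1:ℝ) - 1/u = (u-1)/u by field_simp, div_div_eq_mul_div]
    ring
  have hH := HMono (Set.mem_Ioi.mpr hs1) (Set.mem_Ioi.mpr hu) hsu
  simp only [hHu] at hH
  have KI : v0 * ((v0 + k) - 1) < (v0 + k) * Real.log (v0 + k) := by
    have h4 : v0 < (v0 + k) * Real.log (v0 + k) / ((v0 + k) - 1) := by linarith
    rw [lt_div_iff₀ (by linarith)] at h4
    nlinarith
  -- r < -(v0/(v0+k))
  have hskpos : (0:ℝ) < v0 + k := by linarith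
  have hglt : r * Real.exp r < (-(v0/(v0+k))) * Real.exp (-(v0/(v0+k))) := by
    rw [hre]
    have e1 : -v0 * Real.exp (-v0) = -Real.exp (Real.log v0 - v0) := by
      rw [Real.exp_sub, Real.exp_log hv0pos, Real.exp_neg]; ring
    have e2 : (-(v0/(v0+k))) * Real.exp (-(v0/(v0+k)))
        = -Real.exp (Real.log (v0/(v0+k)) - v0/(v0+k)) := by
      rw [Real.exp_sub, Real.exp_log (by positivity), Real.exp_neg]; ring
    rw [e1, e2, neg_lt_neg_iff, Real.exp_lt_exp,
      Real.log_div hv0ne (ne_of_gt hskpos)]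
    have h5 : v0 - v0/(v0+k) < Real.log (v0+k) := by
      have h6 : v0 - Real.log (v0+k) < v0/(v0+k) := by
        rw [lt_div_iff₀ hskpos]
        nlinarith [KI]
      linarith
    linarith
  have hbmem : (-(v0/(v0+k))) ∈ Set.Ici (-1:ℝ) := by
    simp only [Set.mem_Ici]
    have : v0/(v0+k) ≤ 1 := by rw [div_le_one hskpos]; linarith
    linarith
  have hrlt : r < -(v0/(v0+k)) :=
    (gMono.lt_iff_lt (Set.mem_Ici.mpr hr1) hbmem).mp hglt
  have hc1 : 1 < -((v0+k)*r/v0) := by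
    rw [lt_neg, div_lt_iff₀ hv0pos]
    have h7 := mul_lt_mul_of_pos_right hrlt hskpos
    rw [neg_mul, div_mul_cancel₀ _ (ne_of_gt hskpos)] at h7
    nlinarith
  -- w * e^w = cE * e^cE, with cE = (v0+k)*r/v0 < -1
  have hev0 : Real.exp (-v0) = -(r * Real.exp r) / v0 := by
    rw [eq_div_iff hv0ne]
    linear_combination hre
  have hcw : w * Real.exp w = ((v0+k)*r/v0) * Real.exp ((v0+k)*r/v0) := by
    rw [hwe]
    calc -(v0+k) * Real.exp (-v0 + k*r/v0)
        = -(v0+k) * (Real.exp (-v0) * Real.exp (k*r/v0)) := by rw [← Real.exp_add]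
      _ = -(v0+k) * (-(r*Real.exp r)/v0 * Real.exp (k*r/v0)) := by rw [hev0]
      _ = ((v0+k)*r/v0) * (Real.exp r * Real.exp (k*r/v0)) := by ring
      _ = ((v0+k)*r/v0) * Real.exp (r + k*r/v0) := by rw [← Real.exp_add]
      _ = ((v0+k)*r/v0) * Real.exp ((v0+k)*r/v0) := by
          rw [show r + k*r/v0 = (v0+k)*r/v0 by field_simp]
  set cE : ℝ := (v0+k)*r/v0 with hcEdef
  have hcElt : cE < -1 := by linarith
  have hcEne : cE ≠ 0 := by intro h; rw [h] at hcElt; linarith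
  -- w > -1
  have hwgt : -1 < w := by
    have hcpos : (0:ℝ) < -cE := by linarith
    have hlog : Real.log (-cE) < -cE - 1 :=
      Real.log_lt_sub_one_of_pos hcpos (by intro h; linarith)
    have h8 : (-cE) * Real.exp cE < Real.exp (-1) := by
      have h9 : (-cE) * Real.exp cE = Real.exp (Real.log (-cE) + cE) := by
        rw [Real.exp_add, Real.exp_log hcpos]
      rw [h9]
      exact Real.exp_lt_exp.mpr (by linarith)
    have hgw : (fun t : ℝ => t * Real.exp t) (-1) < (fun t : ℝ => t * Real.exp t) w := by
      simp only
      rw [hcw]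
      linarith
    exact (gMono.lt_iff_lt (Set.mem_Ici.mpr (le_refl _)) (Set.mem_Ici.mpr hw1)).mp hgw
  have hy0pos : 0 < w - (v0+k)*r/v0 := by
    rw [← hcEdef]; linarith
  -- exp(-(w - cE)) = w / cE
  have h10 : w * Real.exp w * Real.exp (-w) = cE * Real.exp cE * Real.exp (-w) := by
    rw [hcw]
  rw [mul_assoc, ← Real.exp_add, mul_assoc, ← Real.exp_add] at h10
  simp only [add_neg_cancel, Real.exp_zero, mul_one] at h10
  -- h10 : w = cE * Real.exp (cE + -w)
  have hexpy : Real.exp (-(w - (v0+k)*r/v0)) = w / cE := by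
    rw [← hcEdef, show -(w - cE) = cE + -w by ring, eq_div_iff hcEne]
    linear_combination -h10
  have hney : 1 - Real.exp (-(w - (v0+k)*r/v0)) ≠ 0 := by
    have : Real.exp (-(w - (v0+k)*r/v0)) < 1 :=
      Real.exp_lt_one_iff.mpr (by rw [← hcEdef]; linarith)
    linarith
  have eq2 : v0 + k = (w - (v0 + k) * r / v0) * Real.exp (v0 + r) /
      (1 - Real.exp (-(w - (v0 + k) * r / v0))) := by
    rw [eq_div_iff hney, hexpy, hexpx, hcEdef]
    have hskne : v0 + k ≠ 0 := ne_of_gt hskpos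
    field_simp [hrne, hv0ne, hskne]
    ring
  refine ⟨hxpos, hy0pos, eq1, eq2, ?_⟩
  intro x y hx hy he1 he2
  have hnex : 1 - Real.exp (-x) ≠ 0 := by
    have : Real.exp (-x) < 1 := Real.exp_lt_one_iff.mpr (by linarith)
    linarith
  have hxeq : x = v0 + r := by
    apply psiMono.injOn (Set.mem_Ioi.mpr hx) (Set.mem_Ioi.mpr hxpos)
    simp only
    rw [← he1, ← eq1]
  subst hxeq
  refine ⟨rfl, ?_⟩
  have hney2 : 1 - Real.exp (-y) ≠ 0 := by
    have : Real.exp (-y) < 1 := Real.exp_lt_one_iff.mpr (by linarith)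
    linarith
  apply psiMono.injOn (Set.mem_Ioi.mpr hy) (Set.mem_Ioi.mpr hy0pos)
  simp only
  rw [eq_div_iff hney2] at he2
  rw [hexpx] at he2
  -- he2 : (v0 + k) * (1 - Real.exp (-y)) = y * (v0 / -r)  -- orientation?
  have hpsy : y / (1 - Real.exp (-y)) = -cE := by
    have he2' : (v0 + k) * (1 - Real.exp (-y)) * (-r) = y * v0 := by
      rw [he2, mul_assoc, div_mul_cancel₀ _ (neg_ne_zero.mpr hrne)]
    rw [div_eq_iff hney2, hcEdef]
    field_simp [hrne, hv0ne]
    linear_combination -he2'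
  have hpsy0 : (w - (v0+k)*r/v0) / (1 - Real.exp (-(w - (v0+k)*r/v0))) = -cE := by
    rw [hexpy, div_eq_iff (by rw [hexpy] at hney; exact hney)]
    rw [← hcEdef]
    field_simp
    ring
  rw [hpsy, hpsy0]
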